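/- Let p be a prime, let A_1, …, A_k be finite abelian p-groups, and let q be a power of p. Let φ : A_1 × ⋯ × A_k → ℤ/qℤ be a multilinear map such that φ(x) = 0 whenever p·x_i = 0 for some i ∈ {1,…,k}. Then there exists a multilinear map ψ : A_1 × ⋯ × A_k → ℤ/(pq)ℤ such that π ∘ ψ = φ, where π : ℤ/(pq)ℤ → ℤ/qℤ is the reduction-mod-q map. -/

import Mathlib

/-- A map of (dependent) products of abelian groups is multiadditive (multilinear over ℤ)
if it is additive in each coordinate separately. -/
def IsMultiadditive {ι : Type} [DecidableEq ι] {A : ι → Type} [∀ i, AddCommGroup (A i)]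
    {B : Type} [AddCommMonoid B] (φ : (∀ i, A i) → B) : Prop :=
  ∀ (i : ι) (x : ∀ j, A j) (a b : A i),
    φ (Function.update x i (a + b)) = φ (Function.update x i a) + φ (Function.update x i b)

/-- Key lifting lemma: a hom from a finite abelian `p`-group killing the `p`-torsion,
whose values all lift along `r` (whose kernel is killed by `p`), lifts to a hom. -/
lemma key_lift {A V W : Type} [AddCommGroup A] [Finite A] [AddCommGroup V] [AddCommGroup W]
    (p : ℕ) (hp : p.Prime) (hA : ∀ a : A, ∃ m : ℕ, p ^ m • a = 0)
    (r : W →+ V) (hker : ∀ w, r w = 0 → p • w = 0)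
    (F : A →+ V) (hFtor : ∀ a : A, p • a = 0 → F a = 0)
    (hlift : ∀ a : A, ∃ w, r w = F a) :
    ∃ G : A →+ W, ∀ a, r (G a) = F a := by
  classical
  obtain ⟨ι, hι, q, hq, n, ⟨eqv⟩⟩ := AddCommGroup.equiv_directSum_zmod_of_finite A
  have hwex : ∀ i : ι, ∃ w : W,
      r w = F (eqv.symm (DirectSum.of (fun j => ZMod (q j ^ n j)) i 1)) ∧
      (q i ^ n i) • w = 0 := by
    intro i
    set a : A := eqv.symm (DirectSum.of (fun j => ZMod (q j ^ n j)) i 1) with ha_def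
    by_cases ha : a = 0
    · exact ⟨0, by simp [ha], smul_zero _⟩
    · -- The order of `a` divides `q i ^ n i`
      have hNa : (q i ^ n i) • a = 0 := by
        rw [ha_def, ← map_nsmul, ← map_nsmul]
        have : (q i ^ n i) • (1 : ZMod (q i ^ n i)) = 0 := by
          simp [nsmul_eq_mul, ZMod.natCast_self]
        rw [this]
        simp
      obtain ⟨m, hm⟩ := hA a
      -- Show q i = p
      have hqp : q i = p := by
        by_contra hne
        have hcop : Nat.Coprime (p ^ m) (q i ^ n i) :=
          ((Nat.coprime_primes hp (hq i)).mpr (fun h => hne h.symm)).pow m (n i)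
        have h1 : addOrderOf a ∣ p ^ m := addOrderOf_dvd_of_nsmul_eq_zero hm
        have h2 : addOrderOf a ∣ q i ^ n i := addOrderOf_dvd_of_nsmul_eq_zero hNa
        have : addOrderOf a ∣ 1 := hcop ▸ Nat.dvd_gcd h1 h2
        exact ha (AddMonoid.addOrderOf_eq_one_iff.mp (Nat.dvd_one.mp this))
      -- n i ≥ 1
      obtain ⟨n', hn'⟩ : ∃ n', n i = n' + 1 := by
        have h0 : n i ≠ 0 := by
          intro h0
          apply ha
          rw [ha_def]
          have h1 : (1 : ZMod (q i ^ n i)) = 0 := by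
            haveI : Subsingleton (ZMod (q i ^ n i)) := by
              rw [show q i ^ n i = 1 from by rw [h0, pow_zero]]
              infer_instance
            exact Subsingleton.elim _ _
          rw [h1]
          simp
        exact ⟨n i - 1, (Nat.succ_pred_eq_of_ne_zero h0).symm⟩
      obtain ⟨w, hw⟩ := hlift a
      refine ⟨w, hw, ?_⟩
      have hFpa : F (p ^ n' • a) = 0 := by
        apply hFtor
        rw [smul_smul, ← pow_succ', ← hn', ← hqp]
        exact hNa
      have hr : r (p ^ n' • w) = 0 := by
        rw [map_nsmul, hw, ← map_nsmul, hFpa]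
      have := hker _ hr
      rw [smul_smul, ← pow_succ'] at this
      rw [hqp, hn']
      exact this
  choose w hw1 hw2 using hwex
  have hwz : ∀ i : ι, ((q i ^ n i : ℤ)) • (w i) = 0 := by
    intro i
    rw [← Nat.cast_pow, natCast_zsmul]
    exact hw2 i
  set c : ∀ i : ι, ZMod (q i ^ n i) →+ W := fun i =>
    ZMod.lift _ ⟨zmultiplesHom W (w i), by simpa using hwz i⟩ with hc
  refine ⟨(DirectSum.toAddMonoid c).comp eqv.toAddMonoidHom, ?_⟩
  have hext : r.comp (DirectSum.toAddMonoid c)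
      = F.comp (AddEquiv.toAddMonoidHom eqv.symm) := by
    apply DirectSum.addHom_ext
    intro i y
    obtain ⟨t, rfl⟩ := ZMod.intCast_surjective y
    simp only [AddMonoidHom.comp_apply, DirectSum.toAddMonoid_of, hc, ZMod.lift_coe,
      zmultiplesHom_apply, AddEquiv.toAddMonoidHom_eq_coe, AddMonoidHom.coe_coe]
    rw [map_zsmul, hw1 i]
    have : ((t : ℤ) : ZMod (q i ^ n i)) = t • (1 : ZMod (q i ^ n i)) := by
      rw [zsmul_eq_mul, mul_one]
    rw [this, ← map_zsmul, ← map_zsmul, ← map_zsmul]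
  intro a
  have := congrArg (fun f => f (eqv a)) hext
  simpa using this

/-- Multiadditive maps form an additive subgroup of the function space. -/
def maSubgroup {k : ℕ} (A : Fin k → Type) [∀ i, AddCommGroup (A i)]
    {B : Type} [AddCommGroup B] : AddSubgroup ((∀ i, A i) → B) where
  carrier := {f | IsMultiadditive f}
  zero_mem' := by intro i x a b; simp
  add_mem' := by
    intro f g hf hg i x a b
    simp only [Pi.add_apply, hf i x a b, hg i x a b]
    abel
  neg_mem' := by
    intro f hf i x a b
    simp only [Pi.neg_apply, hf i x a b]
    abel

lemma cast_kill (p e : ℕ) (hp : 0 < p) (z : ZMod (p ^ (e + 1)))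
    (h : ZMod.castHom (pow_dvd_pow p e.le_succ) (ZMod (p ^ e)) z = 0) : p • z = 0 := by
  haveI : NeZero (p ^ e) := ⟨(pow_pos hp e).ne'⟩
  haveI : NeZero (p ^ (e + 1)) := ⟨(pow_pos hp (e + 1)).ne'⟩
  have h1 : ((z.val : ℕ) : ZMod (p ^ e)) = 0 := by
    rw [ZMod.natCast_val, ← ZMod.castHom_apply (h := pow_dvd_pow p e.le_succ), h]
  have h2 : p ^ e ∣ z.val := (ZMod.natCast_eq_zero_iff _ _).mp h1
  have h3 : z = ((z.val : ℕ) : ZMod (p ^ (e + 1))) := (ZMod.natCast_rightInverse z).symm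
  have h4 : p • z = ((p * z.val : ℕ) : ZMod (p ^ (e + 1))) := by
    rw [nsmul_eq_mul, Nat.cast_mul, ← h3]
  rw [h4, ZMod.natCast_eq_zero_iff]
  exact (dvd_of_eq (pow_succ' p e)).trans (mul_dvd_mul_left p h2)

lemma main_aux (p : ℕ) (hp : p.Prime) (e : ℕ) (k : ℕ) :
    ∀ (A : Fin k → Type) [∀ i, AddCommGroup (A i)] [∀ i, Fintype (A i)],
    (∀ i (a : A i), ∃ m : ℕ, p ^ m • a = 0) →
    ∀ (φ : (∀ i, A i) → ZMod (p ^ e)), IsMultiadditive φ →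
    (∀ x : ∀ i, A i, (∃ i, p • x i = 0) → φ x = 0) →
    ∃ ψ : (∀ i, A i) → ZMod (p ^ (e + 1)),
      IsMultiadditive ψ ∧
      ∀ x, ZMod.castHom (pow_dvd_pow p e.le_succ) (ZMod (p ^ e)) (ψ x) = φ x := by
  haveI : NeZero (p ^ e) := ⟨(pow_pos hp.pos e).ne'⟩
  induction k with
  | zero =>
    intro A _ _ hA φ hφ hvan
    refine ⟨fun x => ((φ x).val : ZMod (p ^ (e + 1))), ?_, ?_⟩
    · intro i; exact absurd i.2 (by simp)
    · intro x
      rw [map_natCast, ZMod.natCast_rightInverse]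
  | succ k ih =>
    intro A _ _ hA φ hφ hvan
    classical
    set A' : Fin k → Type := fun i => A i.castSucc with hA'def
    set V := maSubgroup A' (B := ZMod (p ^ e)) with hV
    set W := maSubgroup A' (B := ZMod (p ^ (e + 1))) with hW
    -- reduction map r : W →+ V
    set cast : ZMod (p ^ (e + 1)) →+ ZMod (p ^ e) :=
      (ZMod.castHom (pow_dvd_pow p e.le_succ) (ZMod (p ^ e))).toAddMonoidHom with hcast
    have hcomp : ∀ (f : (∀ i, A' i) → ZMod (p ^ (e + 1))), IsMultiadditive f →
        IsMultiadditive (fun x => cast (f x)) := by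
      intro f hf i x a b
      simp only [hf i x a b, map_add]
    set r : W →+ V := {
      toFun := fun w => ⟨fun x => cast (w.1 x), hcomp w.1 w.2⟩
      map_zero' := by ext x; simp
      map_add' := by intro u v; ext x; simp } with hr
    -- curried map F
    have hFma : ∀ a : A (Fin.last k), IsMultiadditive (fun x : ∀ i, A' i => φ (Fin.snoc x a)) := by
      intro a i x u v
      have h := hφ i.castSucc (Fin.snoc x a) u v
      simp only [← Fin.snoc_update] at h
      exact h
    set F : A (Fin.last k) →+ V := AddMonoidHom.mk' (fun a =>
        ⟨fun x => φ (Fin.snoc x a), hFma a⟩) (by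
      intro a b
      ext x
      show φ (Fin.snoc x (a + b)) = φ (Fin.snoc x a) + φ (Fin.snoc x b)
      have h := hφ (Fin.last k) (Fin.snoc x a) a b
      simp only [Fin.update_snoc_last] at h
      exact h) with hF
    have hker : ∀ w : W, r w = 0 → p • w = 0 := by
      intro w hw
      ext x
      have hx : cast (w.1 x) = 0 := by
        have := congrArg (fun f => f.1 x) hw
        exact this
      have := cast_kill p e hp.pos (w.1 x) hx
      simpa using this
    have hFtor : ∀ a : A (Fin.last k), p • a = 0 → F a = 0 := by
      intro a ha
      ext x
      show φ (Fin.snoc x a) = 0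
      exact hvan _ ⟨Fin.last k, by simpa using ha⟩
    have hlift : ∀ a : A (Fin.last k), ∃ w : W, r w = F a := by
      intro a
      obtain ⟨ψ, hψ1, hψ2⟩ := ih A' (fun i => hA i.castSucc) (fun x => φ (Fin.snoc x a))
        (hFma a) (by
          intro x ⟨i, hi⟩
          exact hvan _ ⟨i.castSucc, by simpa using hi⟩)
      refine ⟨⟨ψ, hψ1⟩, ?_⟩
      ext x
      exact hψ2 x
    obtain ⟨G, hG⟩ := key_lift p hp (hA (Fin.last k)) r hker F hFtor hlift
    refine ⟨fun x => (G (x (Fin.last k))).1 (Fin.init x), ?_, ?_⟩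
    · intro i x a b
      induction i using Fin.lastCases with
      | last =>
        simp only [Function.update_self, Fin.init_update_last, map_add]
        rfl
      | cast j =>
        have hne : j.castSucc ≠ Fin.last k := (Fin.castSucc_lt_last j).ne
        have hx : ∀ c : A j.castSucc, Function.update x j.castSucc c (Fin.last k)
            = x (Fin.last k) := fun c => Function.update_of_ne hne.symm c x
        simp only [hx, Fin.init_update_castSucc]
        exact (G (x (Fin.last k))).2 j (Fin.init x) a b
    · intro x
      have h := congrArg (fun f : V => (f : (∀ i, A' i) → ZMod (p ^ e)) (Fin.init x))
        (hG (x (Fin.last k)))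
      have h2 : cast ((G (x (Fin.last k))).1 (Fin.init x))
          = φ (Fin.snoc (Fin.init x) (x (Fin.last k))) := h
      rw [Fin.snoc_init_self] at h2
      exact h2

/-- **Range enlargement.** If `A_1, …, A_k` are finite abelian `p`-groups, `q = p^e`, and
`φ : A_1 × ⋯ × A_k → ℤ/q` is a multilinear map vanishing whenever some `x_i` is killed by `p`,
then `φ` lifts to a multilinear map `ψ : A_1 × ⋯ × A_k → ℤ/pq` with `ψ mod q = φ`. -/
theorem range_enlargement (p : ℕ) (hp : p.Prime) (e k : ℕ)
    (A : Fin k → Type) [∀ i, AddCommGroup (A i)] [∀ i, Fintype (A i)]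
    (hA : ∀ i (a : A i), ∃ m : ℕ, p ^ m • a = 0)
    (φ : (∀ i, A i) → ZMod (p ^ e)) (hφ : IsMultiadditive φ)
    (hvan : ∀ x : ∀ i, A i, (∃ i, p • x i = 0) → φ x = 0) :
    ∃ ψ : (∀ i, A i) → ZMod (p ^ (e + 1)),
      IsMultiadditive ψ ∧
      ∀ x, ZMod.castHom (pow_dvd_pow p e.le_succ) (ZMod (p ^ e)) (ψ x) = φ x := by
  exact main_aux p hp e k A hA φ hφ hvan
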